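/- Let n and k be natural numbers with k ≤ n and let q ∈ [0, 1] be a real number. Then the following identity holds: (1/2^{kn}) · Σ_{G} Σ_{S ⊆ {1,…,n}} q^{|S|} (1 − q)^{n−|S|} · 𝟙[rank(G|_S) < k] = Σ_{ñ=0}^{n} ε_d(k, ñ) · C(n, ñ) · q^ñ (1 − q)^{n−ñ}, where the outer sum on the left runs over all k × n matrices G over 𝔽₂, G|_S denotes the k × |S| submatrix of G formed by the columns indexed by S, 𝟙[·] is the indicator function, and C(n, ñ) is the binomial coefficient. -/

import Mathlib

open Matrix

/-- The rank-deficiency probability `ε_d(k, ñ) = 1 - ∏_{i=0}^{k-1} (1 - 2^{i-ñ})` of a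
uniformly random `k × ñ` matrix over `𝔽₂`. -/
noncomputable def epsDef (k ntilde : ℕ) : ℝ :=
  1 - ∏ i ∈ Finset.range k, (1 - (2 : ℝ) ^ ((i : ℤ) - (ntilde : ℤ)))

lemma rank_lt_iff_aux {k : ℕ} {ι : Type} [Fintype ι] (A : Matrix (Fin k) ι (ZMod 2)) :
    A.rank < k ↔ ¬ LinearIndependent (ZMod 2) A := by
  constructor
  · intro h hli
    rw [hli.rank_matrix, Fintype.card_fin] at h
    exact lt_irrefl _ h
  · intro h
    have hle : A.rank ≤ k := by simpa using A.rank_le_card_height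
    rcases hle.lt_or_eq with h' | h'
    · exact h'
    · exfalso
      apply h
      refine linearIndependent_iff_card_eq_finrank_span.mpr ?_
      rw [Fintype.card_fin]
      rw [A.rank_eq_finrank_span_row] at h'
      exact h'.symm

lemma eps_formula_aux {k m : ℕ} (hk : k ≤ m) :
    (2:ℝ) ^ (k * m) * epsDef k m
      = 2 ^ (k * m) - ∏ i ∈ Finset.range k, ((2:ℝ) ^ m - 2 ^ i) := by
  have h2 : (2:ℝ) ^ (k * m) = ∏ _i ∈ Finset.range k, (2:ℝ) ^ m := by
    rw [Finset.prod_const, Finset.card_range, ← pow_mul, mul_comm]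
  rw [epsDef, mul_sub, mul_one, h2, ← Finset.prod_mul_distrib]
  congr 1
  apply Finset.prod_congr rfl
  intro i hi
  have : (2:ℝ) ^ m * (2:ℝ) ^ ((i : ℤ) - (m : ℤ)) = 2 ^ i := by
    rw [show (2:ℝ) ^ m = (2:ℝ) ^ (m : ℤ) by norm_num, ← zpow_add₀ (by norm_num : (2:ℝ) ≠ 0)]
    norm_num
  rw [mul_sub, mul_one, this]

lemma count_real_aux (k : ℕ) (ι : Type) [Fintype ι] [DecidableEq ι] :
    ∑ A : Matrix (Fin k) ι (ZMod 2), (if A.rank < k then (1:ℝ) else 0)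
      = 2 ^ (k * Fintype.card ι) * epsDef k (Fintype.card ι) := by
  classical
  set m := Fintype.card ι with hm
  have hcard : Fintype.card (Matrix (Fin k) ι (ZMod 2)) = 2 ^ (k * m) := by
    rw [← Nat.card_eq_fintype_card]
    show Nat.card (Fin k → ι → ZMod 2) = _
    rw [Nat.card_pi]
    simp [Nat.card_eq_fintype_card, ZMod.card, Finset.prod_const, ← pow_mul, mul_comm, hm]
  rcases lt_or_ge m k with hlt | hle
  · have hall : ∀ A : Matrix (Fin k) ι (ZMod 2), A.rank < k := fun A =>
      lt_of_le_of_lt (by simpa using A.rank_le_card_width) hlt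
    have heps : epsDef k m = 1 := by
      rw [epsDef, Finset.prod_eq_zero (Finset.mem_range.mpr hlt) (by norm_num), sub_zero]
    simp only [hall, if_true, Finset.sum_const, nsmul_eq_mul, mul_one, heps,
      Finset.card_univ, hcard]
    push_cast; ring
  · have hNat : Nat.card { s : Fin k → (ι → ZMod 2) // LinearIndependent (ZMod 2) s } =
        ∏ i : Fin k, (2 ^ m - 2 ^ i.val) := by
      have h1 : Module.finrank (ZMod 2) (ι → ZMod 2) = m := by simp [Module.finrank_pi, hm]
      have := card_linearIndependent (K := ZMod 2) (V := ι → ZMod 2) (k := k)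
        (by rw [h1]; exact hle)
      rw [this, h1, ZMod.card]
    have key : ∀ A : Matrix (Fin k) ι (ZMod 2),
        (if A.rank < k then (1:ℝ) else 0) =
          1 - (if LinearIndependent (ZMod 2) A then (1:ℝ) else 0) := by
      intro A
      by_cases h : LinearIndependent (ZMod 2) A <;>
        simp [rank_lt_iff_aux, h]
    rw [Finset.sum_congr rfl fun A _ => key A, Finset.sum_sub_distrib, Finset.sum_boole]
    have hfilt : (Finset.univ.filter
        (fun A : Matrix (Fin k) ι (ZMod 2) => LinearIndependent (ZMod 2) A)).card
        = ∏ i : Fin k, (2 ^ m - 2 ^ i.val) := by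
      rw [← hNat, Nat.card_eq_fintype_card, Fintype.card_subtype]
      exact congrArg Finset.card (Finset.filter_congr_decidable ..)
    rw [hfilt, Finset.sum_const, Finset.card_univ, hcard, eps_formula_aux hle]
    have hcast : ((∏ i : Fin k, (2 ^ m - 2 ^ i.val) : ℕ) : ℝ)
        = ∏ i ∈ Finset.range k, ((2:ℝ) ^ m - 2 ^ i) := by
      rw [← Finset.prod_range fun i => (2 ^ m - 2 ^ i : ℕ), Nat.cast_prod]
      apply Finset.prod_congr rfl
      intro i hi
      have h2 : (2:ℕ) ^ i ≤ 2 ^ m :=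
        Nat.pow_le_pow_right (by norm_num) (le_trans (Finset.mem_range.mp hi).le hle)
      rw [Nat.cast_sub h2]
      push_cast; ring
    rw [hcast]
    push_cast; ring

lemma sum_submatrix_aux (k n : ℕ) (S : Finset (Fin n)) :
    ∑ G : Matrix (Fin k) (Fin n) (ZMod 2),
      (if (G.submatrix id (fun j : {x // x ∈ S} => (j : Fin n))).rank < k then (1:ℝ) else 0)
    = 2 ^ (k * (n - S.card)) * (2 ^ (k * S.card) * epsDef k S.card) := by
  classical
  let e : Matrix (Fin k) (Fin n) (ZMod 2) ≃
      (Matrix (Fin k) {x // x ∈ S} (ZMod 2)) × (Matrix (Fin k) {x // ¬ (x ∈ S)} (ZMod 2)) :=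
    (Equiv.piCongrRight (fun _ : Fin k =>
      Equiv.piEquivPiSubtypeProd (· ∈ S) (fun _ => ZMod 2))).trans
      (Equiv.arrowProdEquivProdArrow _ _ _)
  have hfst : ∀ G : Matrix (Fin k) (Fin n) (ZMod 2),
      (e G).1 = G.submatrix id (fun j : {x // x ∈ S} => (j : Fin n)) := by
    intro G; rfl
  rw [← Equiv.sum_comp e.symm]
  have : ∀ p : (Matrix (Fin k) {x // x ∈ S} (ZMod 2)) × (Matrix (Fin k) {x // ¬ x ∈ S} (ZMod 2)),
      ((e.symm p).submatrix id (fun j : {x // x ∈ S} => (j : Fin n))) = p.1 := by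
    intro p
    rw [← hfst (e.symm p), Equiv.apply_symm_apply]
  rw [Finset.sum_congr rfl fun p _ => by rw [this p]]
  rw [Fintype.sum_prod_type_right]
  have hc1 : Fintype.card {x // x ∈ S} = S.card := Fintype.card_coe S
  have hc2 : Fintype.card (Matrix (Fin k) {x // ¬ x ∈ S} (ZMod 2)) = 2 ^ (k * (n - S.card)) := by
    have : Fintype.card {x : Fin n // ¬ x ∈ S} = n - S.card := by
      rw [Fintype.card_subtype_compl]
      simp [Fintype.card_coe]
    rw [← Nat.card_eq_fintype_card]
    show Nat.card (Fin k → {x // ¬ x ∈ S} → ZMod 2) = _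
    rw [Nat.card_pi]
    simp [Nat.card_eq_fintype_card, ZMod.card, this, Finset.prod_const, ← pow_mul, mul_comm]
  have hinner : ∀ y : Matrix (Fin k) {x // ¬ x ∈ S} (ZMod 2),
      ∑ x : Matrix (Fin k) {x // x ∈ S} (ZMod 2),
        (if (x, y).1.rank < k then (1:ℝ) else 0) = 2 ^ (k * S.card) * epsDef k S.card := by
    intro y
    simp only [Prod.fst]
    rw [count_real_aux, hc1]
  rw [Finset.sum_congr rfl fun y _ => hinner y, Finset.sum_const, Finset.card_univ, hc2]
  push_cast
  ring

/-- Law of total probability for the average rank-deficiency probability: for a uniformly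
random `k × n` generator matrix `G` over `𝔽₂` whose columns are independently retained
with probability `q`, the probability that the retained submatrix has rank `< k` equals
`Σ_{ñ=0}^{n} ε_d(k, ñ) · C(n, ñ) · q^ñ (1-q)^{n-ñ}`. -/
theorem average_rank_deficiency_binomial (k n : ℕ) (hkn : k ≤ n)
    (q : ℝ) (hq0 : 0 ≤ q) (hq1 : q ≤ 1) :
    (1 / 2 ^ (k * n)) *
        ∑ G : Matrix (Fin k) (Fin n) (ZMod 2), ∑ S : Finset (Fin n),
          q ^ S.card * (1 - q) ^ (n - S.card) *
            (if (G.submatrix id (fun j : {x // x ∈ S} => (j : Fin n))).rank < k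
              then (1 : ℝ) else 0)
      = ∑ ntilde ∈ Finset.range (n + 1),
          epsDef k ntilde * (n.choose ntilde : ℝ) * q ^ ntilde * (1 - q) ^ (n - ntilde) := by
  classical
  rw [Finset.sum_comm]
  have hS : ∀ S : Finset (Fin n),
      ∑ G : Matrix (Fin k) (Fin n) (ZMod 2),
        q ^ S.card * (1 - q) ^ (n - S.card) *
          (if (G.submatrix id (fun j : {x // x ∈ S} => (j : Fin n))).rank < k
            then (1 : ℝ) else 0)
      = 2 ^ (k * n) * (q ^ S.card * (1 - q) ^ (n - S.card) * epsDef k S.card) := by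
    intro S
    rw [← Finset.mul_sum, sum_submatrix_aux]
    have hm : S.card ≤ n := by simpa using S.card_le_univ
    have : (2:ℝ) ^ (k * (n - S.card)) * 2 ^ (k * S.card) = 2 ^ (k * n) := by
      rw [← pow_add, ← Nat.mul_add, Nat.sub_add_cancel hm]
    rw [← this]
    ring
  rw [Finset.sum_congr rfl fun S _ => hS S, ← Finset.mul_sum, ← mul_assoc]
  rw [one_div, inv_mul_cancel₀ (by positivity : ((2:ℝ) ^ (k * n)) ≠ 0), one_mul]
  -- now group subsets by cardinality
  rw [show (Finset.univ : Finset (Finset (Fin n))) = (Finset.univ : Finset (Fin n)).powerset by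
    rw [Finset.powerset_univ]]
  rw [Finset.sum_powerset]
  rw [Finset.card_univ, Fintype.card_fin]
  apply Finset.sum_congr rfl
  intro m hm
  have hsum : ∀ S ∈ Finset.powersetCard m (Finset.univ : Finset (Fin n)),
      q ^ S.card * (1 - q) ^ (n - S.card) * epsDef k S.card
        = q ^ m * (1 - q) ^ (n - m) * epsDef k m := by
    intro S hSm
    rw [(Finset.mem_powersetCard.mp hSm).2]
  rw [Finset.sum_congr rfl hsum, Finset.sum_const, Finset.card_powersetCard,
    Finset.card_univ, Fintype.card_fin]
  push_cast
  ring
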